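/- arXiv:1801.01105 — 9 statements merged into one kernel-verified Lean document; each statement's English description precedes it below -/
import Mathlib

section
/- For every positive integer m, the integer k_m := ⌊(1 − √2/2)·m⌉ (the nearest integer to (1 − √2/2)m) satisfies u_m − 1/2 ≤ k_m < u_m + 1/2, where u_m := m − √(2m² − 1)/2. -/
theorem stmt_1 (m : ℕ) (hm : 0 < m)
    (k : ℤ) (hk : k = round ((1 - Real.sqrt 2 / 2) * m))
    (u : ℝ) (hu : u = (m : ℝ) - Real.sqrt (2 * (m : ℝ)^2 - 1) / 2) :
    u - 1/2 ≤ (k : ℝ) ∧ (k : ℝ) < u + 1/2 := by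
  have hm1 : (1:ℝ) ≤ (m:ℝ) := by exact_mod_cast hm
  have h2 : (0:ℝ) ≤ 2 * (m:ℝ)^2 - 1 := by nlinarith
  have hs : Real.sqrt (2*(m:ℝ)^2 - 1) ^ 2 = 2*(m:ℝ)^2 - 1 := Real.sq_sqrt h2
  have hsnn : 0 ≤ Real.sqrt (2*(m:ℝ)^2 - 1) := Real.sqrt_nonneg _
  have hs2 : Real.sqrt 2 ^ 2 = 2 := Real.sq_sqrt (by norm_num)
  have hs2nn : 0 ≤ Real.sqrt 2 := Real.sqrt_nonneg _
  set x : ℝ := (1 - Real.sqrt 2 / 2) * m with hx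
  have habs : |x - (k:ℝ)| ≤ 1/2 := by rw [hk]; exact abs_sub_round x
  have hk1 : x - 1/2 ≤ (k:ℝ) := by
    have := abs_le.mp habs; linarith [this.2]
  have hk2 : (k:ℝ) ≤ x + 1/2 := by
    have := abs_le.mp habs; linarith [this.1]
  have hxu : x < u := by
    rw [hu, hx]
    have hlt : Real.sqrt (2*(m:ℝ)^2 - 1) < Real.sqrt 2 * m := by
      nlinarith [mul_nonneg hs2nn (le_of_lt (lt_of_lt_of_le one_pos hm1))]
    nlinarith
  refine ⟨?_, by linarith⟩
  by_contra h
  push_neg at h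
  -- so x - 1/2 ≤ k < u - 1/2
  set n : ℤ := 2*((m:ℤ) - k) - 1 with hn
  have hncast : (n:ℝ) = 2*(m:ℝ) - 2*(k:ℝ) - 1 := by push_cast [hn]; ring
  have hnlow : Real.sqrt (2*(m:ℝ)^2 - 1) < (n:ℝ) := by
    rw [hncast, hu] at *
    linarith
  have hnhigh : (n:ℝ) ≤ Real.sqrt 2 * m := by
    rw [hncast]
    have : x - 1/2 ≤ (k:ℝ) := hk1
    rw [hx] at this
    nlinarith
  have hnpos : (0:ℝ) < (n:ℝ) := lt_of_le_of_lt hsnn hnlow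
  have hnsq_lo : 2*(m:ℝ)^2 - 1 < (n:ℝ)^2 := by nlinarith
  have hnsq_hi : (n:ℝ)^2 ≤ 2*(m:ℝ)^2 := by nlinarith
  have hlo' : 2*(m:ℤ)^2 - 1 < n^2 := by exact_mod_cast hnsq_lo
  have hhi' : n^2 ≤ 2*(m:ℤ)^2 := by exact_mod_cast hnsq_hi
  have heq : n^2 = 2*(m:ℤ)^2 := by omega
  -- contradiction with irrationality of sqrt 2
  have heqR : (n:ℝ)^2 = 2*(m:ℝ)^2 := by exact_mod_cast heq
  have hmpos : (0:ℝ) < (m:ℝ) := by linarith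
  have hsq : (n:ℝ) = Real.sqrt 2 * (m:ℝ) := by
    have h1 : Real.sqrt ((n:ℝ)^2) = Real.sqrt (2*(m:ℝ)^2) := by rw [heqR]
    rwa [Real.sqrt_sq hnpos.le, Real.sqrt_mul (by norm_num : (0:ℝ) ≤ 2),
      Real.sqrt_sq hmpos.le] at h1
  have : Real.sqrt 2 = (n:ℝ) / (m:ℝ) := by
    rw [hsq]; field_simp
  exact irrational_sqrt_two ⟨(n:ℚ)/(m:ℚ), by push_cast; rw [this]⟩
end

section
/- Let m ≥ 2 be an integer and let 1 ≤ k ≤ m−1 be an integer. Then the function x ↦ ((m−k)(2kx² + 2kx + m)) / ((m−k)·2kx² + m²), defined for x > 0, attains its maximum at x = m/(√((2m−k)k) − k), and the maximum value equals 1 + (√((2m−k)k) − k)/(2m). -/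
theorem stmt_3 (m k : ℕ) (hm : 2 ≤ m) (hk1 : 1 ≤ k) (hkm : k ≤ m - 1)
    (f : ℝ → ℝ)
    (hf : ∀ x : ℝ, f x =
      (((m : ℝ) - k) * (2 * k * x^2 + 2 * k * x + m)) /
        (((m : ℝ) - k) * (2 * k) * x^2 + (m : ℝ)^2))
    (x₀ : ℝ) (hx₀ : x₀ = (m : ℝ) / (Real.sqrt ((2 * (m : ℝ) - k) * k) - k)) :
    (0 < x₀) ∧ (∀ x : ℝ, 0 < x → f x ≤ f x₀) ∧
      f x₀ = 1 + (Real.sqrt ((2 * (m : ℝ) - k) * k) - k) / (2 * m) := by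
  have hk : (1:ℝ) ≤ k := by exact_mod_cast hk1
  have hmk : k + 1 ≤ m := by omega
  have hmkR : (k:ℝ) + 1 ≤ m := by exact_mod_cast hmk
  have hm0 : (0:ℝ) < m := by linarith
  set s := Real.sqrt ((2 * (m:ℝ) - k) * k) with hs
  have hs0 : 0 ≤ s := Real.sqrt_nonneg _
  have hs2 : s^2 = (2 * (m:ℝ) - k) * k := Real.sq_sqrt (by nlinarith)
  have hsk : (k:ℝ) < s := by nlinarith
  have ht : (0:ℝ) < s - k := by linarith
  have hx0pos : 0 < x₀ := by rw [hx₀]; positivity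
  have h1 : x₀ * (s - k) = m := by
    rw [hx₀]; field_simp
  have hDpos : ∀ x : ℝ, 0 < ((m:ℝ) - k) * (2 * k) * x^2 + (m:ℝ)^2 := by
    intro x
    have h2 : (0:ℝ) ≤ ((m:ℝ) - k) * (2 * k) * x^2 :=
      mul_nonneg (mul_nonneg (by linarith) (by linarith)) (sq_nonneg x)
    nlinarith
  have hval : f x₀ = 1 + (s - k) / (2 * m) := by
    rw [hf]
    rw [div_eq_iff (ne_of_gt (hDpos x₀))]
    have h2 : (1 + (s - k) / (2 * m)) = (2 * m + s - k) / (2 * m) := by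
      field_simp; ring
    rw [h2, div_mul_eq_mul_div, eq_div_iff (by positivity : (2*(m:ℝ)) ≠ 0)]
    linear_combination (m*((s:ℝ)+k) - 2*k*((m:ℝ)-k)*x₀) * h1 - m*x₀*hs2
  refine ⟨hx0pos, ?_, hval⟩
  intro x hx
  rw [hf x, hval]
  have h2 : (1 + (s - k) / (2 * m)) = (2 * m + s - k) / (2 * m) := by
    field_simp; ring
  rw [h2, div_le_div_iff₀ (hDpos x) (by positivity)]
  nlinarith [mul_nonneg (mul_nonneg (by linarith : (0:ℝ) ≤ 2*k) (by linarith : (0:ℝ) ≤ (m:ℝ)-k)) (sq_nonneg ((s-k)*x - m)), ht, hs2, mul_pos ht hm0]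
end

section
/- For every positive integer m with k_m := ⌊(1 − √2/2)m⌉, the machine-dependent bound satisfies 1 + (√((2m − k_m)k_m) − k_m)/(2m) ≤ (1 + √2)/2, and the difference (1+√2)/2 − (1 + (√((2m−k_m)k_m) − k_m)/(2m)) tends to 0 as m → ∞. -/
theorem stmt_4
    (k : ℕ → ℤ) (hk : ∀ m : ℕ, k m = round ((1 - Real.sqrt 2 / 2) * m))
    (b : ℕ → ℝ)
    (hb : ∀ m : ℕ, b m =
      1 + (Real.sqrt ((2 * (m : ℝ) - k m) * k m) - k m) / (2 * m)) :
    (∀ m : ℕ, 1 ≤ m → b m ≤ (1 + Real.sqrt 2) / 2) ∧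
      Filter.Tendsto (fun m : ℕ => (1 + Real.sqrt 2) / 2 - b m) Filter.atTop (nhds 0) := by
  set s := Real.sqrt 2 with hsdef
  have hs : s * s = 2 := Real.mul_self_sqrt (by norm_num)
  have hs0 : (0:ℝ) ≤ s := Real.sqrt_nonneg 2
  have hsl : (1.4:ℝ) < s := by nlinarith
  have hsu : s < 1.5 := by nlinarith
  have habs : ∀ m : ℕ, |(k m : ℝ) - (1 - s / 2) * m| ≤ 1/2 := by
    intro m
    rw [hk]
    rw [abs_sub_comm]
    exact abs_sub_round ((1 - s / 2) * (m:ℝ))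
  -- upper bound on the sqrt
  have hub : ∀ m : ℕ, 1 ≤ m →
      Real.sqrt ((2 * (m : ℝ) - k m) * k m) ≤ (s - 1) * m + k m := by
    intro m hm
    have hm1 : (1:ℝ) ≤ m := by exact_mod_cast hm
    obtain ⟨h1, h2⟩ := abs_le.mp (habs m)
    have hx : (0:ℝ) ≤ (s - 1) * m + k m := by nlinarith
    have hid : ((s - 1) * m + k m)^2 - 2 * ((k m : ℝ) - (1 - s/2) * m)^2
        = (2 * (m:ℝ) - k m) * k m := by
      linear_combination ((m:ℝ)^2 / 2) * hs
    have hP : (2 * (m:ℝ) - k m) * k m ≤ ((s - 1) * m + k m)^2 := by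
      nlinarith [sq_nonneg ((k m : ℝ) - (1 - s/2) * m)]
    calc Real.sqrt ((2 * (m : ℝ) - k m) * k m)
        ≤ Real.sqrt (((s - 1) * m + k m)^2) := Real.sqrt_le_sqrt hP
      _ = (s - 1) * m + k m := Real.sqrt_sq hx
  have part1 : ∀ m : ℕ, 1 ≤ m → b m ≤ (1 + s) / 2 := by
    intro m hm
    have hm1 : (1:ℝ) ≤ m := by exact_mod_cast hm
    have h2m : (0:ℝ) < 2 * m := by linarith
    have h := hub m hm
    rw [hb m]
    have h3 : (Real.sqrt ((2 * (m : ℝ) - k m) * k m) - k m) / (2 * m) ≤ (s - 1) / 2 := by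
      rw [div_le_div_iff₀ h2m (by norm_num)]
      nlinarith
    linarith
  -- lower bound on the sqrt for large m
  have hlb : ∀ m : ℕ, 50 ≤ m →
      (s - 1) * m + k m - 20 ≤ Real.sqrt ((2 * (m : ℝ) - k m) * k m) := by
    intro m hm
    have hm1 : (50:ℝ) ≤ m := by exact_mod_cast hm
    obtain ⟨h1, h2⟩ := abs_le.mp (habs m)
    have hx20 : (0:ℝ) ≤ (s - 1) * m + k m - 20 := by nlinarith
    have hid : ((s - 1) * m + k m)^2 - 2 * ((k m : ℝ) - (1 - s/2) * m)^2
        = (2 * (m:ℝ) - k m) * k m := by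
      linear_combination ((m:ℝ)^2 / 2) * hs
    have hd : ((k m : ℝ) - (1 - s/2) * m)^2 ≤ 1/4 := by nlinarith
    have hP : ((s - 1) * m + k m - 20)^2 ≤ (2 * (m:ℝ) - k m) * k m := by nlinarith
    calc (s - 1) * m + k m - 20
        = Real.sqrt (((s - 1) * m + k m - 20)^2) := (Real.sqrt_sq hx20).symm
      _ ≤ Real.sqrt ((2 * (m : ℝ) - k m) * k m) := Real.sqrt_le_sqrt hP
  refine ⟨part1, ?_⟩
  apply squeeze_zero' (g := fun m : ℕ => 10 / (m : ℝ))
  · filter_upwards [Filter.eventually_atTop.mpr ⟨1, fun m hm => hm⟩] with m hm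
    have := part1 m hm
    linarith
  · filter_upwards [Filter.eventually_atTop.mpr ⟨50, fun m hm => hm⟩] with m hm
    have hm1 : (50:ℝ) ≤ m := by exact_mod_cast hm
    have hm0 : (0:ℝ) < m := by linarith
    have h2m : (0:ℝ) < 2 * m := by linarith
    have h := hlb m hm
    rw [hb m]
    have key : ((s - 1) * m - 20) / (2 * m)
        ≤ (Real.sqrt ((2 * (m : ℝ) - k m) * k m) - k m) / (2 * m) := by
      apply div_le_div_of_nonneg_right _ (le_of_lt h2m)
      linarith
    have heq : ((s - 1) * (m:ℝ) - 20) / (2 * m) = (s - 1) / 2 - 10 / m := by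
      field_simp
      ring
    rw [heq] at key
    linarith
  · exact tendsto_const_div_atTop_nhds_zero_nat 10
end

section
/- For every α ∈ [1/2, 1], the function λ_L(s, x) = ((1 − s)(2sx(αx + 1) + 1)) / (2αs(1 − s)x² + 1), considered for fixed s ∈ (0, 1) as a function of x > 0, satisfies λ_L(s, x_s) = 1 + (1/2)(√((2(1 − s) + αs)αs)/α − s), where x_s = (αs + √((2(1 − s) + αs)αs)) / (2αs(1 − s)). -/
theorem stmt_6 (α s : ℝ) (hα : α ∈ Set.Icc (1/2 : ℝ) 1) (hs : s ∈ Set.Ioo (0 : ℝ) 1)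
    (xs : ℝ)
    (hxs : xs = (α * s + Real.sqrt ((2 * (1 - s) + α * s) * (α * s))) / (2 * α * s * (1 - s))) :
    ((1 - s) * (2 * s * xs * (α * xs + 1) + 1)) / (2 * α * s * (1 - s) * xs^2 + 1)
      = 1 + (1/2) * (Real.sqrt ((2 * (1 - s) + α * s) * (α * s)) / α - s) := by
  obtain ⟨hα1, hα2⟩ := hα
  obtain ⟨hs0, hs1⟩ := hs
  have hαpos : (0:ℝ) < α := by linarith
  set r := Real.sqrt ((2 * (1 - s) + α * s) * (α * s)) with hrdef
  have hr2 : r^2 = (2 * (1 - s) + α * s) * (α * s) := Real.sq_sqrt (by nlinarith [mul_pos hαpos hs0, mul_pos hs0 (sub_pos.mpr hs1)])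
  have h1 : (0:ℝ) < 2*α*s*(1-s) := mul_pos (mul_pos (mul_pos two_pos hαpos) hs0) (sub_pos.mpr hs1)
  subst hxs
  have hd : 2 * α * s * (1 - s) * ((α * s + r) / (2 * α * s * (1 - s)))^2 + 1 ≠ 0 := by
    have := sq_nonneg ((α * s + r) / (2 * α * s * (1 - s)))
    nlinarith [mul_nonneg h1.le this]
  rw [div_eq_iff hd]
  field_simp
  linear_combination (-(r + α*s)) * hr2
end

section
/- For every α ∈ [1/2, 1], the function g(s) = 1 + (1/2)(√((2(1 − s) + αs)·αs)/α − s) on s ∈ (0, 1) attains its maximum at s = 1/(2 + √(2α)), and the maximum value is 1 + 1/(2α + √(8α)). -/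
theorem stmt_7 (α : ℝ) (hα : α ∈ Set.Icc (1/2 : ℝ) 1)
    (g : ℝ → ℝ)
    (hg : ∀ s : ℝ, g s = 1 + (1/2) * (Real.sqrt ((2 * (1 - s) + α * s) * (α * s)) / α - s))
    (s₀ : ℝ) (hs₀ : s₀ = 1 / (2 + Real.sqrt (2 * α))) :
    s₀ ∈ Set.Ioo (0 : ℝ) 1 ∧ (∀ s ∈ Set.Ioo (0 : ℝ) 1, g s ≤ g s₀) ∧
      g s₀ = 1 + 1 / (2 * α + Real.sqrt (8 * α)) := by
  obtain ⟨hα1, hα2⟩ := hα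
  have hα0 : 0 < α := by linarith
  set t := Real.sqrt (2*α) with htdef
  have ht2 : t^2 = 2*α := Real.sq_sqrt (by linarith)
  have ht0 : 0 < t := Real.sqrt_pos.mpr (by linarith)
  have htlt : t < 2 := by nlinarith
  have h2t : (0:ℝ) < 2 + t := by linarith
  have hs0pos : 0 < s₀ := by rw [hs₀]; positivity
  have hs0lt : s₀ < 1 := by rw [hs₀, div_lt_one h2t]; linarith
  have hs0id : s₀ * (2 + t) = 1 := by rw [hs₀]; field_simp
  have hQ0 : (2 * (1 - s₀) + α * s₀) * (α * s₀) = α / 2 := by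
    have h1 : s₀ = 1 / (2 + t) := hs₀
    rw [h1]
    field_simp
    nlinarith [ht2]
  have hsqrt0 : Real.sqrt ((2 * (1 - s₀) + α * s₀) * (α * s₀)) = t/2 := by
    rw [hQ0, show α/2 = (t/2)^2 by nlinarith, Real.sqrt_sq (by linarith)]
  refine ⟨⟨hs0pos, hs0lt⟩, ?_, ?_⟩
  · intro s hs
    obtain ⟨hs1, hs2⟩ := hs
    rw [hg, hg, hsqrt0]
    have hQ : 0 ≤ (2 * (1 - s) + α * s) * (α * s) :=
      le_of_lt (mul_pos (by nlinarith) (mul_pos hα0 hs1))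
    set X := Real.sqrt ((2 * (1 - s) + α * s) * (α * s)) with hX
    have hX0 : 0 ≤ X := Real.sqrt_nonneg _
    have hX2 : X^2 = (2 * (1 - s) + α * s) * (α * s) := Real.sq_sqrt hQ
    have h3 : t*X ≤ X^2 + α/2 := by nlinarith [sq_nonneg (X - t/2)]
    have hid : α + t*α*(s - s₀) - X^2 - α/2 = α*(2-α)*(s-s₀)^2 := by
      linear_combination (-1 : ℝ)*hX2 + (α*s*s₀ - α*s₀^2/2)*ht2
        + (α*(2-t)*s - α/2 - α*(2-t)*s₀/2)*hs0id
    have h4 : X^2 + α/2 ≤ α + t*α*(s - s₀) := by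
      nlinarith [mul_nonneg (mul_nonneg hα0.le (by linarith : (0:ℝ) ≤ 2-α)) (sq_nonneg (s - s₀))]
    have key : t*X ≤ t*(t/2 + α*(s - s₀)) := by nlinarith [h3, h4]
    have key2 : X ≤ t/2 + α*(s - s₀) := le_of_mul_le_mul_left key ht0
    have h6 : X/α ≤ (t/2 + α*(s-s₀))/α := by gcongr
    have h7 : (t/2 + α*(s-s₀))/α = t/2/α + (s - s₀) := by field_simp
    rw [h7] at h6
    linarith
  · rw [hg, hsqrt0, show (8:ℝ)*α = (2*t)^2 by linear_combination (-4:ℝ)*ht2, Real.sqrt_sq (by linarith)]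
    have hval : t/2/α - s₀ = 2/(2*α + 2*t) := by
      field_simp
      ring_nf
      linear_combination (1 + α*s₀)*ht2 + (-t*α)*hs0id
    rw [hval]; ring
end

section
/- For every Δ ≥ 0, the function α ↦ 1 + (1/2)·max{ 1/(α + √(2α)), (1 + Δ)/(1 + √(2/α)) } on the interval [1/2, 1] is minimized at α = 1/min{2, 1 + Δ}, and the minimum value is 1 + (1/2)·(1 + Δ)/(1 + min{2, √(2(1 + Δ))}). -/
private lemma gmono {a b : ℝ} (ha : 0 < a) (hab : a ≤ b) :
    1 / (b + Real.sqrt (2 * b)) ≤ 1 / (a + Real.sqrt (2 * a)) := by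
  have h1 : 0 < a + Real.sqrt (2 * a) := by positivity
  gcongr

private lemma hmono {c a b : ℝ} (hc : 0 ≤ c) (ha : 0 < a) (hab : a ≤ b) :
    c / (1 + Real.sqrt (2 / a)) ≤ c / (1 + Real.sqrt (2 / b)) := by
  have hb : 0 < b := lt_of_lt_of_le ha hab
  have h1 : 0 < 1 + Real.sqrt (2 / b) := by positivity
  gcongr

theorem stmt_9 (Δ : ℝ) (hΔ : 0 ≤ Δ)
    (f : ℝ → ℝ)
    (hf : ∀ α : ℝ, f α =
      1 + (1/2) * max (1 / (α + Real.sqrt (2 * α))) ((1 + Δ) / (1 + Real.sqrt (2 / α))))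
    (α₀ : ℝ) (hα₀ : α₀ = 1 / min 2 (1 + Δ)) :
    α₀ ∈ Set.Icc (1/2 : ℝ) 1 ∧ (∀ α ∈ Set.Icc (1/2 : ℝ) 1, f α₀ ≤ f α) ∧
      f α₀ = 1 + (1/2) * (1 + Δ) / (1 + min 2 (Real.sqrt (2 * (1 + Δ)))) := by
  rcases le_or_gt Δ 1 with hcase | hcase
  · -- Case Δ ≤ 1
    set t : ℝ := 1 + Δ with ht_def
    have ht1 : 1 ≤ t := by simp [ht_def]; linarith
    have ht2 : t ≤ 2 := by simp [ht_def]; linarith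
    have ht0 : 0 < t := by linarith
    have hmin : min 2 t = t := min_eq_right ht2
    have hα₀' : α₀ = 1 / t := by rw [hα₀, hmin]
    set s : ℝ := Real.sqrt (2 * t) with hs_def
    have hs0 : 0 ≤ s := Real.sqrt_nonneg _
    have hs2 : s ^ 2 = 2 * t := Real.sq_sqrt (by positivity)
    have hsle2 : s ≤ 2 := by nlinarith
    have hsge1 : 1 ≤ s := by nlinarith
    have hq1 : Real.sqrt (2 * (1 / t)) = s / t := by
      rw [show 2 * (1 / t) = (2 * t) / t ^ 2 by field_simp,
        Real.sqrt_div (by positivity), Real.sqrt_sq ht0.le]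
    have hq2 : Real.sqrt (2 / (1 / t)) = s := by
      rw [show (2 : ℝ) / (1 / t) = 2 * t by field_simp]
    have hfα₀ : f α₀ = 1 + (1/2) * (t / (1 + s)) := by
      rw [hα₀', hf, hq1, hq2]
      have e1 : 1 / t + s / t = (1 + s) / t := by ring
      rw [e1, one_div_div, max_self]
    have hmem : α₀ ∈ Set.Icc (1/2 : ℝ) 1 := by
      rw [hα₀']
      constructor
      · rw [div_le_div_iff₀ (by norm_num) ht0]; linarith
      · rw [div_le_one ht0]; linarith
    refine ⟨hmem, ?_, ?_⟩
    · intro α hα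
      obtain ⟨hα1, hα2⟩ := hα
      have hα0 : 0 < α := by linarith
      rw [hf α, hfα₀]
      rcases le_total α (1 / t) with hle | hle
      · have key : t / (1 + s) ≤ 1 / (α + Real.sqrt (2 * α)) := by
          have := gmono hα0 hle
          rw [hq1] at this
          calc t / (1 + s) = 1 / (1 / t + s / t) := by
                rw [← add_div, one_div_div]
            _ ≤ _ := this
        have hle2 : 1 / (α + Real.sqrt (2 * α)) ≤
            max (1 / (α + Real.sqrt (2 * α))) ((1 + Δ) / (1 + Real.sqrt (2 / α))) :=
          le_max_left _ _
        linarith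
      · have h1t : (0:ℝ) < 1 / t := by positivity
        have key : t / (1 + s) ≤ (1 + Δ) / (1 + Real.sqrt (2 / α)) := by
          have := hmono (c := t) ht0.le h1t hle
          rw [hq2] at this
          calc t / (1 + s) ≤ t / (1 + Real.sqrt (2 / α)) := this
            _ = (1 + Δ) / (1 + Real.sqrt (2 / α)) := by rw [ht_def]
        have hle2 : (1 + Δ) / (1 + Real.sqrt (2 / α)) ≤
            max (1 / (α + Real.sqrt (2 * α))) ((1 + Δ) / (1 + Real.sqrt (2 / α))) :=
          le_max_right _ _
        linarith
    · rw [hfα₀, min_eq_right hsle2]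
      ring
  · -- Case Δ ≥ 1
    have hmin : min 2 (1 + Δ) = 2 := min_eq_left (by linarith)
    have hα₀' : α₀ = 1 / 2 := by rw [hα₀, hmin]
    have hq1 : Real.sqrt (2 * (1/2 : ℝ)) = 1 := by norm_num
    have hq2 : Real.sqrt (2 / (1/2 : ℝ)) = 2 := by
      rw [show (2 : ℝ) / (1/2) = 2 ^ 2 by norm_num, Real.sqrt_sq (by norm_num)]
    have hfα₀ : f α₀ = 1 + (1/2) * ((1 + Δ) / 3) := by
      rw [hα₀', hf, hq1, hq2]
      norm_num
      linarith
    set s : ℝ := Real.sqrt (2 * (1 + Δ)) with hs_def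
    have hs0 : 0 ≤ s := Real.sqrt_nonneg _
    have hs2 : s ^ 2 = 2 * (1 + Δ) := Real.sq_sqrt (by positivity)
    have hsge2 : 2 ≤ s := by nlinarith
    refine ⟨by rw [hα₀']; constructor <;> norm_num, ?_, ?_⟩
    · intro α hα
      obtain ⟨hα1, hα2⟩ := hα
      rw [hf α, hfα₀]
      have key : (1 + Δ) / 3 ≤ (1 + Δ) / (1 + Real.sqrt (2 / α)) := by
        have := hmono (c := 1 + Δ) (by linarith) (by norm_num : (0:ℝ) < 1/2) hα1
        rw [hq2] at this
        calc (1 + Δ) / 3 = (1 + Δ) / (1 + 2) := by norm_num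
          _ ≤ _ := this
      have hle2 : (1 + Δ) / (1 + Real.sqrt (2 / α)) ≤
          max (1 / (α + Real.sqrt (2 * α))) ((1 + Δ) / (1 + Real.sqrt (2 / α))) :=
        le_max_right _ _
      linarith
    · rw [hfα₀, min_eq_left hsge2]
      ring
end

section
/- Suppose random variables X, Y, and nonnegative reals ρ_j, w_j = ρ_j·E[p_j], Var[p_j] ≤ Δ·E[p_j]², E[p_j] ≤ E[C_j^{Π*}], and E[Σρ_j p_j C_j^{WSEPT}] ≤ (1+β)·E[Σ ρ_j p_j C_j^{Π*}] hold, where p_j is independent of the start times under both WSEPT and Π*. Then E[Σ w_j C_j^{WSEPT}] ≤ (1 + β(1+Δ))·E[Σ w_j C_j^{Π*}]. -/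
open MeasureTheory ProbabilityTheory

/-- Abstract core of the WSPT→WSEPT transfer theorem. `SW j`/`SO j` are the start times of
job `j` under WSEPT and under an optimal policy `Π*`; completion times are `S + p`. -/
theorem stmt_16 {Ω : Type*} [MeasurableSpace Ω] (μ : Measure Ω) [IsProbabilityMeasure μ]
    (n : ℕ) (p SW SO : Fin n → Ω → ℝ)
    (ρ w : Fin n → ℝ) (Δ β : ℝ) (hΔ : 0 ≤ Δ) (hβ : 0 ≤ β)
    (hp0 : ∀ j ω, 0 ≤ p j ω)
    (hρ : ∀ j, 0 ≤ ρ j)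
    (hw : ∀ j, w j = ρ j * ∫ ω, p j ω ∂μ)
    (hp2 : ∀ j, MemLp (p j) 2 μ)
    (hSW : ∀ j, Integrable (SW j) μ) (hSO : ∀ j, Integrable (SO j) μ)
    (hpSW : ∀ j, Integrable (fun ω => p j ω * SW j ω) μ)
    (hpSO : ∀ j, Integrable (fun ω => p j ω * SO j ω) μ)
    (hindW : ∀ j, IndepFun (p j) (SW j) μ)
    (hindO : ∀ j, IndepFun (p j) (SO j) μ)
    (hvar : ∀ j, variance (p j) μ ≤ Δ * (∫ ω, p j ω ∂μ)^2)
    (hEp : ∀ j, ∫ ω, p j ω ∂μ ≤ ∫ ω, (SO j ω + p j ω) ∂μ)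
    (hwspt : ∫ ω, (∑ j, ρ j * (p j ω * (SW j ω + p j ω))) ∂μ ≤
      (1 + β) * ∫ ω, (∑ j, ρ j * (p j ω * (SO j ω + p j ω))) ∂μ) :
    ∑ j, w j * ∫ ω, (SW j ω + p j ω) ∂μ ≤
      (1 + β * (1 + Δ)) * ∑ j, w j * ∫ ω, (SO j ω + p j ω) ∂μ := by
  have hpint : ∀ j, Integrable (p j) μ := fun j => (hp2 j).integrable one_le_two
  have hpsq : ∀ j, Integrable (fun ω => p j ω * p j ω) μ := by
    intro j
    have := (hp2 j).integrable_sq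
    simpa [pow_two] using this
  set E : Fin n → ℝ := fun j => ∫ ω, p j ω ∂μ with hE
  set sW : Fin n → ℝ := fun j => ∫ ω, SW j ω ∂μ with hsW
  set sO : Fin n → ℝ := fun j => ∫ ω, SO j ω ∂μ with hsO
  set Q : Fin n → ℝ := fun j => ∫ ω, p j ω * p j ω ∂μ with hQ
  have hE0 : ∀ j, 0 ≤ E j := fun j => integral_nonneg (fun ω => hp0 j ω)
  have hmulW : ∀ j, ∫ ω, p j ω * SW j ω ∂μ = E j * sW j := by
    intro j
    have := (hindW j).integral_mul_eq_mul_integral (hpint j).aestronglyMeasurable (hSW j).aestronglyMeasurable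
    simpa [Pi.mul_apply] using this
  have hmulO : ∀ j, ∫ ω, p j ω * SO j ω ∂μ = E j * sO j := by
    intro j
    have := (hindO j).integral_mul_eq_mul_integral (hpint j).aestronglyMeasurable (hSO j).aestronglyMeasurable
    simpa [Pi.mul_apply] using this
  -- rewrite hwspt
  have hterm : ∀ (S : Fin n → Ω → ℝ), (∀ j, Integrable (S j) μ) →
      (∀ j, Integrable (fun ω => p j ω * S j ω) μ) →
      ∀ j, ∫ ω, ρ j * (p j ω * (S j ω + p j ω)) ∂μ
        = ρ j * (∫ ω, p j ω * S j ω ∂μ + Q j) := by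
    intro S _ hpS j
    rw [integral_const_mul]
    congr 1
    have : (fun ω => p j ω * (S j ω + p j ω))
        = fun ω => p j ω * S j ω + p j ω * p j ω := by
      funext ω; ring
    rw [this, integral_add (hpS j) (hpsq j)]
  have hsum : ∀ (S : Fin n → Ω → ℝ), (∀ j, Integrable (S j) μ) →
      (∀ j, Integrable (fun ω => p j ω * S j ω) μ) →
      ∫ ω, (∑ j, ρ j * (p j ω * (S j ω + p j ω))) ∂μ
        = ∑ j, ρ j * (∫ ω, p j ω * S j ω ∂μ + Q j) := by
    intro S hS hpS
    rw [integral_finset_sum]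
    · exact Finset.sum_congr rfl fun j _ => hterm S hS hpS j
    · intro j _
      have : Integrable (fun ω => p j ω * S j ω + p j ω * p j ω) μ :=
        (hpS j).add (hpsq j)
      refine (this.const_mul (ρ j)).congr ?_
      filter_upwards with ω
      ring
  rw [hsum SW hSW hpSW, hsum SO hSO hpSO] at hwspt
  simp only [hmulW, hmulO] at hwspt
  -- integrals of completion times
  have hCW : ∀ j, ∫ ω, (SW j ω + p j ω) ∂μ = sW j + E j := fun j =>
    integral_add (hSW j) (hpint j)
  have hCO : ∀ j, ∫ ω, (SO j ω + p j ω) ∂μ = sO j + E j := fun j =>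
    integral_add (hSO j) (hpint j)
  have hsO0 : ∀ j, 0 ≤ sO j := by
    intro j
    have := hEp j
    rw [hCO j] at this
    linarith
  -- variance bound: Q j ≤ (1+Δ) * E j ^ 2
  have hQle : ∀ j, Q j ≤ (1 + Δ) * E j ^ 2 := by
    intro j
    have hv := hvar j
    rw [variance_eq_sub (hp2 j)] at hv
    have : (∫ ω, (p j ^ 2) ω ∂μ) = Q j := by
      simp [hQ, pow_two]
    rw [this] at hv
    nlinarith [hv]
  simp only [hw, hCW, hCO]
  -- abbreviate sums
  set A := ∑ j, ρ j * (E j * sW j) with hA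
  set B := ∑ j, ρ j * (E j * sO j) with hB
  set QQ := ∑ j, ρ j * Q j with hQQ
  set P := ∑ j, ρ j * E j ^ 2 with hP
  have hLHS : ∑ j, ρ j * E j * (sW j + E j) = A + P := by
    rw [hA, hP, ← Finset.sum_add_distrib]
    exact Finset.sum_congr rfl fun j _ => by ring
  have hRHS : ∑ j, ρ j * E j * (sO j + E j) = B + P := by
    rw [hB, hP, ← Finset.sum_add_distrib]
    exact Finset.sum_congr rfl fun j _ => by ring
  have hwspt' : A + QQ ≤ (1 + β) * (B + QQ) := by
    have h1 : ∑ j, ρ j * (E j * sW j + Q j) = A + QQ := by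
      rw [hA, hQQ, ← Finset.sum_add_distrib]
      exact Finset.sum_congr rfl fun j _ => by ring
    have h2 : ∑ j, ρ j * (E j * sO j + Q j) = B + QQ := by
      rw [hB, hQQ, ← Finset.sum_add_distrib]
      exact Finset.sum_congr rfl fun j _ => by ring
    rwa [h1, h2] at hwspt
  have hQP : QQ ≤ (1 + Δ) * P := by
    rw [hQQ, hP, Finset.mul_sum]
    refine Finset.sum_le_sum fun j _ => ?_
    have := mul_le_mul_of_nonneg_left (hQle j) (hρ j)
    linarith
  have hB0 : 0 ≤ B :=
    Finset.sum_nonneg fun j _ => mul_nonneg (hρ j) (mul_nonneg (hE0 j) (hsO0 j))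
  have hP0 : 0 ≤ P :=
    Finset.sum_nonneg fun j _ => mul_nonneg (hρ j) (sq_nonneg _)
  rw [hLHS, hRHS]
  have h1 : β * QQ ≤ β * ((1 + Δ) * P) := mul_le_mul_of_nonneg_left hQP hβ
  have h2 : 0 ≤ β * Δ * B := mul_nonneg (mul_nonneg hβ hΔ) hB0
  nlinarith [hwspt', h1, h2]
end

section
/- Let m ≥ 2, α ∈ (0,1], and consider any list schedule of jobs with processing times p₁,…,pₙ > 0 on m machines. Then Σⱼ pⱼ·Cⱼ(α) ≤ (1 + (m−1)/(2αm))·OPT_α, where OPT_α is the minimum over all m-machine schedules of Σⱼ pⱼCⱼ(α). Here the proof combines: (i) Σⱼ pⱼSⱼ^{list} ≤ (1/m)Σⱼ pⱼSⱼ^{1-machine}, and (ii) Σⱼ pⱼCⱼ*(1/2) ≥ (1/m)Σⱼ pⱼCⱼ^{1-machine}(1/2). -/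
/-- A feasible nonpreemptive schedule of `n` jobs with processing times `p` on `m` machines:
jobs on the same machine occupy disjoint time intervals, starting no earlier than time 0. -/
structure Schedule (m : ℕ) {n : ℕ} (p : Fin n → ℝ) where
  machine : Fin n → Fin m
  start : Fin n → ℝ
  start_nonneg : ∀ j, 0 ≤ start j
  disjoint : ∀ j k : Fin n, j ≠ k → machine j = machine k →
    start j + p j ≤ start k ∨ start k + p k ≤ start j

/-- A machine of minimum value of `f`. -/
noncomputable def argminFin {m : ℕ} (hm : 0 < m) (f : Fin m → ℝ) : Fin m :=
  (Finset.exists_min_image Finset.univ f ⟨⟨0, hm⟩, Finset.mem_univ _⟩).choose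

/-- Machine loads after list-scheduling the first `k` jobs (in index order, each job going
to a currently least loaded machine). -/
noncomputable def listLoads (m : ℕ) (hm : 0 < m) (p : ℕ → ℝ) : ℕ → Fin m → ℝ
  | 0 => fun _ => 0
  | k + 1 => fun i =>
      listLoads m hm p k i + (if i = argminFin hm (listLoads m hm p k) then p k else 0)

/-- Start time of job `j` in the list schedule: the minimum load when it is scheduled. -/
noncomputable def listStart (m : ℕ) (hm : 0 < m) (p : ℕ → ℝ) (j : ℕ) : ℝ :=
  Finset.inf' Finset.univ ⟨⟨0, hm⟩, Finset.mem_univ _⟩ (listLoads m hm p j)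

open Finset

lemma loads_sum (m : ℕ) (hm : 0 < m) (p : ℕ → ℝ) (k : ℕ) :
    ∑ i : Fin m, listLoads m hm p k i = ∑ j ∈ range k, p j := by
  induction k with
  | zero => simp [listLoads]
  | succ k ih =>
    simp [listLoads, Finset.sum_add_distrib, ih, Finset.sum_range_succ]

lemma listStart_le (m : ℕ) (hm : 0 < m) (p : ℕ → ℝ) (j : ℕ) :
    (m : ℝ) * listStart m hm p j ≤ ∑ k ∈ range j, p k := by
  calc (m : ℝ) * listStart m hm p j = ∑ _i : Fin m, listStart m hm p j := by
        simp [mul_comm]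
    _ ≤ ∑ i : Fin m, listLoads m hm p j i :=
        Finset.sum_le_sum fun i _ => Finset.inf'_le _ (Finset.mem_univ i)
    _ = ∑ k ∈ range j, p k := loads_sum m hm p j

lemma half_square (p : ℕ → ℝ) (n : ℕ) :
    ∑ j ∈ range n, p j * ∑ k ∈ range j, p k
      = ((∑ j ∈ range n, p j) ^ 2 - ∑ j ∈ range n, (p j) ^ 2) / 2 := by
  induction n with
  | zero => simp
  | succ n ih => rw [sum_range_succ, ih, sum_range_succ, sum_range_succ]; ring

lemma ite_nn {c : Prop} [Decidable c] {a : ℝ} (ha : 0 ≤ a) : 0 ≤ if c then a else 0 := by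
  split <;> simp [ha]

/-- disjoint intervals in `[0,T]` have total length at most `T`. -/
lemma packing {ι : Type*} [DecidableEq ι] :
    ∀ (A : Finset ι) (S q : ι → ℝ) (T : ℝ),
    (∀ k ∈ A, 0 < q k) → (∀ k ∈ A, 0 ≤ S k) →
    (∀ j ∈ A, ∀ k ∈ A, j ≠ k → S j + q j ≤ S k ∨ S k + q k ≤ S j) →
    0 ≤ T → (∀ k ∈ A, S k + q k ≤ T) →
    ∑ k ∈ A, q k ≤ T := by
  intro A
  induction A using Finset.strongInduction with
  | _ A ih =>
    intro S q T hq hS hd hT hend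
    rcases A.eq_empty_or_nonempty with rfl | hA
    · simpa using hT
    · obtain ⟨k, hk, hmax⟩ := A.exists_max_image S hA
      have herase : ∀ k' ∈ A.erase k, S k' + q k' ≤ S k := by
        intro k' hk'
        have hk'A := Finset.mem_of_mem_erase hk'
        have hne : k' ≠ k := Finset.ne_of_mem_erase hk'
        rcases hd k' hk'A k hk hne with h | h
        · exact h
        · exfalso
          have h1 := hmax k' hk'A
          have h2 := hq k hk
          linarith
      have hrec := ih (A.erase k) (Finset.erase_ssubset hk) S q (S k)
        (fun x hx => hq x (Finset.mem_of_mem_erase hx))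
        (fun x hx => hS x (Finset.mem_of_mem_erase hx))
        (fun x hx y hy => hd x (Finset.mem_of_mem_erase hx) y (Finset.mem_of_mem_erase hy))
        (hS k hk) herase
      have hsum : ∑ x ∈ A, q x = q k + ∑ x ∈ A.erase k, q x :=
        (Finset.add_sum_erase A q hk).symm
      have h3 := hend k hk
      linarith

/-- Lower bound for any schedule: weighted sum of starts is at least `(P²/m - Q)/2`. -/
lemma sched_lb (m n : ℕ) (hm0 : 0 < m) (pp : Fin n → ℝ) (hppos : ∀ j, 0 < pp j)
    (σ : Schedule m pp) :
    ((∑ j : Fin n, pp j) ^ 2 / m - ∑ j : Fin n, (pp j) ^ 2) / 2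
      ≤ ∑ j : Fin n, pp j * σ.start j := by
  classical
  set S : Fin n → ℝ := σ.start with hSdef
  set L : Fin m → ℝ := fun i => ∑ k : Fin n, (if σ.machine k = i then pp k else 0) with hL
  -- per-job packing bound
  have hA : ∀ j : Fin n,
      ∑ k ∈ univ.filter (fun k => k ≠ j ∧ σ.machine k = σ.machine j ∧ S k + pp k ≤ S j), pp k
        ≤ S j := by
    intro j
    apply packing _ S pp (S j)
    · exact fun k _ => hppos k
    · exact fun k _ => σ.start_nonneg k
    · intro a ha b hb hab
      simp only [mem_filter] at ha hb
      exact σ.disjoint a b hab (ha.2.2.1.trans hb.2.2.1.symm)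
    · exact σ.start_nonneg j
    · intro k hk
      simp only [mem_filter] at hk
      exact hk.2.2.2
  -- double-sum version
  have hF : ∑ j : Fin n, ∑ k : Fin n,
      (if k ≠ j ∧ σ.machine k = σ.machine j ∧ S k + pp k ≤ S j then pp j * pp k else 0)
        ≤ ∑ j : Fin n, pp j * S j := by
    apply Finset.sum_le_sum
    intro j _
    have heq : ∑ k : Fin n,
        (if k ≠ j ∧ σ.machine k = σ.machine j ∧ S k + pp k ≤ S j then pp j * pp k else 0)
        = pp j * ∑ k ∈ univ.filter
            (fun k => k ≠ j ∧ σ.machine k = σ.machine j ∧ S k + pp k ≤ S j), pp k := by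
      rw [Finset.mul_sum, Finset.sum_filter]
    rw [heq]
    exact mul_le_mul_of_nonneg_left (hA j) (hppos j).le
  -- each off-diagonal same-machine pair is covered (twice after symmetrization)
  have hcover : ∑ j : Fin n, ∑ k : Fin n,
      (if k ≠ j ∧ σ.machine k = σ.machine j then pp j * pp k else 0)
      ≤ 2 * ∑ j : Fin n, ∑ k : Fin n,
        (if k ≠ j ∧ σ.machine k = σ.machine j ∧ S k + pp k ≤ S j then pp j * pp k else 0) := by
    have hsym : ∑ j : Fin n, ∑ k : Fin n,
        (if j ≠ k ∧ σ.machine j = σ.machine k ∧ S j + pp j ≤ S k then pp k * pp j else 0)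
        = ∑ j : Fin n, ∑ k : Fin n,
        (if k ≠ j ∧ σ.machine k = σ.machine j ∧ S k + pp k ≤ S j then pp j * pp k else 0) :=
      Finset.sum_comm
    have key : ∀ j k : Fin n,
        (if k ≠ j ∧ σ.machine k = σ.machine j then pp j * pp k else 0)
        ≤ (if k ≠ j ∧ σ.machine k = σ.machine j ∧ S k + pp k ≤ S j then pp j * pp k else 0)
          + (if j ≠ k ∧ σ.machine j = σ.machine k ∧ S j + pp j ≤ S k then pp k * pp j
              else 0) := by
      intro j k
      have hnn : (0:ℝ) ≤ pp j * pp k := (mul_pos (hppos j) (hppos k)).le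
      have hc : pp k * pp j = pp j * pp k := mul_comm _ _
      have h1 := ite_nn (c := k ≠ j ∧ σ.machine k = σ.machine j ∧ S k + pp k ≤ S j)
        (a := pp j * pp k) hnn
      have h2 := ite_nn (c := j ≠ k ∧ σ.machine j = σ.machine k ∧ S j + pp j ≤ S k)
        (a := pp k * pp j) (by rw [hc]; exact hnn)
      by_cases h : k ≠ j ∧ σ.machine k = σ.machine j
      · rcases σ.disjoint k j h.1 h.2 with hd | hd
        · rw [if_pos h,
            if_pos (show k ≠ j ∧ σ.machine k = σ.machine j ∧ S k + pp k ≤ S j from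
              ⟨h.1, h.2, hd⟩)]
          linarith
        · rw [if_pos h,
            if_pos (show j ≠ k ∧ σ.machine j = σ.machine k ∧ S j + pp j ≤ S k from
              ⟨h.1.symm, h.2.symm, hd⟩)]
          linarith
      · rw [if_neg h]
        linarith
    calc ∑ j : Fin n, ∑ k : Fin n,
        (if k ≠ j ∧ σ.machine k = σ.machine j then pp j * pp k else 0)
        ≤ ∑ j : Fin n, ∑ k : Fin n,
          ((if k ≠ j ∧ σ.machine k = σ.machine j ∧ S k + pp k ≤ S j then pp j * pp k else 0)
          + (if j ≠ k ∧ σ.machine j = σ.machine k ∧ S j + pp j ≤ S k then pp k * pp j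
              else 0)) :=
        Finset.sum_le_sum fun j _ => Finset.sum_le_sum fun k _ => key j k
      _ = (∑ j : Fin n, ∑ k : Fin n,
          (if k ≠ j ∧ σ.machine k = σ.machine j ∧ S k + pp k ≤ S j then pp j * pp k else 0))
          + ∑ j : Fin n, ∑ k : Fin n,
          (if j ≠ k ∧ σ.machine j = σ.machine k ∧ S j + pp j ≤ S k then pp k * pp j else 0) :=
        by simp [Finset.sum_add_distrib]
      _ = _ := by rw [hsym]; ring
  -- diagonal split
  have hdiag : ∀ j : Fin n, ∑ k : Fin n, (if σ.machine k = σ.machine j then pp j * pp k else 0)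
      = pp j ^ 2 + ∑ k : Fin n,
          (if k ≠ j ∧ σ.machine k = σ.machine j then pp j * pp k else 0) := by
    intro j
    have h3 : ∑ k ∈ univ.erase j, (if σ.machine k = σ.machine j then pp j * pp k else 0)
        = ∑ k ∈ univ.erase j,
            (if k ≠ j ∧ σ.machine k = σ.machine j then pp j * pp k else 0) :=
      Finset.sum_congr rfl fun k hk => by
        have hne := Finset.ne_of_mem_erase hk
        simp [hne]
    rw [← Finset.add_sum_erase univ
        (fun k => if σ.machine k = σ.machine j then pp j * pp k else 0) (mem_univ j),
      ← Finset.add_sum_erase univ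
        (fun k => if k ≠ j ∧ σ.machine k = σ.machine j then pp j * pp k else 0) (mem_univ j),
      h3]
    simp [sq]
  -- same-machine total equals sum of squared loads
  have hLid : ∑ j : Fin n, ∑ k : Fin n, (if σ.machine k = σ.machine j then pp j * pp k else 0)
      = ∑ i : Fin m, L i ^ 2 := by
    have h1 : ∀ j : Fin n, ∑ k : Fin n, (if σ.machine k = σ.machine j then pp j * pp k else 0)
        = pp j * L (σ.machine j) := by
      intro j
      rw [hL, Finset.mul_sum]
      exact Finset.sum_congr rfl fun k _ => by split <;> simp
    calc ∑ j : Fin n, ∑ k : Fin n, (if σ.machine k = σ.machine j then pp j * pp k else 0)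
        = ∑ j : Fin n, pp j * L (σ.machine j) := Finset.sum_congr rfl fun j _ => h1 j
      _ = ∑ i : Fin m, ∑ j ∈ univ.filter (fun j => σ.machine j = i), pp j * L (σ.machine j) :=
        (Finset.sum_fiberwise _ _ _).symm
      _ = ∑ i : Fin m, L i ^ 2 := by
        refine Finset.sum_congr rfl fun i _ => ?_
        have h2 : ∑ j ∈ univ.filter (fun j => σ.machine j = i), pp j * L (σ.machine j)
            = ∑ j ∈ univ.filter (fun j => σ.machine j = i), pp j * L i :=
          Finset.sum_congr rfl fun j hj => by rw [(Finset.mem_filter.mp hj).2]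
        rw [h2, ← Finset.sum_mul, Finset.sum_filter, sq]
  -- Cauchy–Schwarz
  have hPL : ∑ i : Fin m, L i = ∑ j : Fin n, pp j := by
    rw [hL, Finset.sum_comm]
    exact Finset.sum_congr rfl fun k _ => by simp
  have hCS : (∑ j : Fin n, pp j) ^ 2 ≤ (m : ℝ) * ∑ i : Fin m, L i ^ 2 := by
    rw [← hPL]
    have := sq_sum_le_card_mul_sum_sq (s := (univ : Finset (Fin m))) (f := L)
    simpa using this
  -- assemble
  have hsplit : ∑ j : Fin n, ∑ k : Fin n,
      (if σ.machine k = σ.machine j then pp j * pp k else 0)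
      = (∑ j : Fin n, pp j ^ 2) + ∑ j : Fin n, ∑ k : Fin n,
          (if k ≠ j ∧ σ.machine k = σ.machine j then pp j * pp k else 0) := by
    rw [← Finset.sum_add_distrib]
    exact Finset.sum_congr rfl fun j _ => hdiag j
  have hm0' : (0:ℝ) < m := by exact_mod_cast hm0
  have hfin : (∑ j : Fin n, pp j) ^ 2 / m - ∑ j : Fin n, pp j ^ 2
      ≤ 2 * ∑ j : Fin n, pp j * S j := by
    have h4 : (∑ j : Fin n, pp j) ^ 2 / m ≤ ∑ i : Fin m, L i ^ 2 := by
      rw [div_le_iff₀ hm0']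
      linarith [hCS]
    have h5 : ∑ j : Fin n, ∑ k : Fin n,
        (if k ≠ j ∧ σ.machine k = σ.machine j then pp j * pp k else 0)
        ≤ 2 * ∑ j : Fin n, pp j * S j := le_trans hcover (by linarith [hF])
    linarith [hLid ▸ hsplit]
  linarith [hfin]

/-- A single-machine schedule: all jobs consecutively on machine 0. -/
noncomputable def oneMachine (m n : ℕ) (hm0 : 0 < m) (p : ℕ → ℝ) (hp : ∀ j < n, 0 < p j) :
    Schedule m (fun j : Fin n => p j) where
  machine := fun _ => ⟨0, hm0⟩
  start := fun j => ∑ k ∈ range j.val, p k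
  start_nonneg := fun j =>
    Finset.sum_nonneg fun k hk => (hp k ((mem_range.mp hk).trans j.isLt)).le
  disjoint := by
    intro j k hjk _
    have key : ∀ a b : Fin n, a.val < b.val →
        (∑ kk ∈ range a.val, p kk) + p a.val ≤ ∑ kk ∈ range b.val, p kk := by
      intro a b hab
      rw [← Finset.sum_range_succ]
      apply Finset.sum_le_sum_of_subset_of_nonneg
      · exact Finset.range_subset_range.mpr hab
      · intro i hi _
        exact (hp i ((mem_range.mp hi).trans b.isLt)).le
    rcases lt_or_gt_of_ne (fun h => hjk (Fin.ext h)) with h | h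
    · exact Or.inl (key j k h)
    · exact Or.inr (key k j h)

theorem stmt_17 (m n : ℕ) (hm : 2 ≤ m) (α : ℝ) (hα : α ∈ Set.Ioc (0 : ℝ) 1)
    (p : ℕ → ℝ) (hp : ∀ j < n, 0 < p j)
    (hm0 : 0 < m)
    (OPT : ℝ)
    (hOPT : OPT = sInf {v : ℝ | ∃ σ : Schedule m (fun j : Fin n => p j),
      v = ∑ j : Fin n, p j * (σ.start j + α * p j)}) :
    ∑ j : Fin n, p j * (listStart m hm0 p j + α * p j) ≤
      (1 + ((m : ℝ) - 1) / (2 * α * m)) * OPT := by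
  obtain ⟨hα0, hα1⟩ := hα
  have hm0' : (0:ℝ) < m := by exact_mod_cast hm0
  set P : ℝ := ∑ j ∈ range n, p j with hP
  set Q : ℝ := ∑ j ∈ range n, (p j) ^ 2 with hQ
  have hQ0 : 0 ≤ Q := Finset.sum_nonneg fun j _ => sq_nonneg _
  have hpfin : ∀ j : Fin n, 0 < p j.val := fun j => hp j j.isLt
  -- Fin-sum versions
  have hPfin : ∑ j : Fin n, p (j : ℕ) = P := Fin.sum_univ_eq_sum_range _ n
  have hQfin : ∑ j : Fin n, (p (j : ℕ)) ^ 2 = Q := Fin.sum_univ_eq_sum_range (fun j => (p j) ^ 2) n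
  -- the set of schedule values
  set V : Set ℝ := {v : ℝ | ∃ σ : Schedule m (fun j : Fin n => p j),
      v = ∑ j : Fin n, p j * (σ.start j + α * p j)} with hV
  have hVne : V.Nonempty := ⟨_, oneMachine m n hm0 p hp, rfl⟩
  -- lower bounds on every element of V
  have hLB1 : ∀ v ∈ V, (P ^ 2 / m - Q) / 2 + α * Q ≤ v := by
    rintro v ⟨σ, rfl⟩
    have h1 := sched_lb m n hm0 (fun j : Fin n => p j) hpfin σ
    simp only [hPfin, hQfin] at h1
    have h2 : ∑ j : Fin n, p (j : ℕ) * (σ.start j + α * p (j : ℕ))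
        = (∑ j : Fin n, p (j : ℕ) * σ.start j) + α * ∑ j : Fin n, (p (j : ℕ)) ^ 2 := by
      rw [Finset.mul_sum, ← Finset.sum_add_distrib]
      exact Finset.sum_congr rfl fun j _ => by ring
    rw [h2, hQfin]
    linarith
  have hLB2 : ∀ v ∈ V, α * Q ≤ v := by
    rintro v ⟨σ, rfl⟩
    have h1 : ∀ j : Fin n, α * (p (j : ℕ)) ^ 2 ≤ p (j : ℕ) * (σ.start j + α * p (j : ℕ)) := by
      intro j
      have := σ.start_nonneg j
      have := hpfin j
      nlinarith
    calc α * Q = ∑ j : Fin n, α * (p (j : ℕ)) ^ 2 := by rw [← hQfin, Finset.mul_sum]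
      _ ≤ _ := Finset.sum_le_sum fun j _ => h1 j
  have hOPT1 : (P ^ 2 / m - Q) / 2 + α * Q ≤ OPT := hOPT ▸ le_csInf hVne hLB1
  have hOPT2 : α * Q ≤ OPT := hOPT ▸ le_csInf hVne hLB2
  -- upper bound on the list schedule
  have hup : ∑ j : Fin n, p (j : ℕ) * (listStart m hm0 p j + α * p (j : ℕ))
      ≤ (P ^ 2 - Q) / (2 * m) + α * Q := by
    have h1 : ∀ j : Fin n, p (j : ℕ) * listStart m hm0 p j
        ≤ p (j : ℕ) * ((∑ k ∈ range (j : ℕ), p k) / m) := by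
      intro j
      apply mul_le_mul_of_nonneg_left _ (hpfin j).le
      rw [le_div_iff₀ hm0', mul_comm]
      exact listStart_le m hm0 p j
    have h2 : ∑ j : Fin n, p (j : ℕ) * (listStart m hm0 p j + α * p (j : ℕ))
        = (∑ j : Fin n, p (j : ℕ) * listStart m hm0 p j)
          + α * ∑ j : Fin n, (p (j : ℕ)) ^ 2 := by
      rw [Finset.mul_sum, ← Finset.sum_add_distrib]
      exact Finset.sum_congr rfl fun j _ => by ring
    have h3 : ∑ j : Fin n, p (j : ℕ) * ((∑ k ∈ range (j : ℕ), p k) / m)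
        = (P ^ 2 - Q) / (2 * m) := by
      have h4 : ∑ j : Fin n, p (j : ℕ) * ((∑ k ∈ range (j : ℕ), p k) / m)
          = ∑ j ∈ range n, p j * ((∑ k ∈ range j, p k) / m) :=
        Fin.sum_univ_eq_sum_range (fun j => p j * ((∑ k ∈ range j, p k) / m)) n
      have h5 : ∑ j ∈ range n, p j * ((∑ k ∈ range j, p k) / m)
          = (∑ j ∈ range n, p j * ∑ k ∈ range j, p k) / m := by
        rw [Finset.sum_div]
        exact Finset.sum_congr rfl fun j _ => by ring
      rw [h4, h5, half_square p n, ← hP, ← hQ]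
      field_simp
    rw [h2, hQfin]
    have := Finset.sum_le_sum fun j (_ : j ∈ (univ : Finset (Fin n))) => h1 j
    rw [h3] at this
    linarith
  -- final arithmetic
  have hβ : ((m : ℝ) - 1) / (2 * α * m) * (α * Q) = ((m : ℝ) - 1) * Q / (2 * m) := by
    field_simp
  have hβ0 : 0 ≤ ((m : ℝ) - 1) / (2 * α * m) := by
    apply div_nonneg
    · have : (2:ℝ) ≤ m := by exact_mod_cast hm
      linarith
    · positivity
  have hβOPT : ((m : ℝ) - 1) / (2 * α * m) * (α * Q)
      ≤ ((m : ℝ) - 1) / (2 * α * m) * OPT := mul_le_mul_of_nonneg_left hOPT2 hβ0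
  have hkey : (P ^ 2 - Q) / (2 * m) + α * Q
      = ((P ^ 2 / m - Q) / 2 + α * Q) + ((m : ℝ) - 1) * Q / (2 * m) := by
    field_simp
    ring
  calc ∑ j : Fin n, p (j : ℕ) * (listStart m hm0 p j + α * p (j : ℕ))
      ≤ (P ^ 2 - Q) / (2 * m) + α * Q := hup
    _ ≤ OPT + ((m : ℝ) - 1) / (2 * α * m) * OPT := by
        rw [hkey, ← hβ]
        linarith
    _ = (1 + ((m : ℝ) - 1) / (2 * α * m)) * OPT := by ring
end

section
/- Let m ≥ 2, k ∈ {1,…,m−1}, x ≥ m/(m−k), and consider λ_m(x, y, k) = ((m−k)(2kx² + 2kx + 2y² + 2y + m)) / ((m−k)(2kx² + y²) + (y+m)²) for y ∈ [0, m/(m−k−1)] (y = 0 if k = m−1). For fixed x and k with k < m−1, the function y ↦ λ_m(x, y, k) is quasi-convex on [0, m/(m−k−1)]; in particular its maximum over this interval is attained at y = 0 or y = m/(m−k−1). -/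
set_option maxHeartbeats 1000000


theorem stmt_19 (m k : ℕ) (hm : 2 ≤ m) (hk1 : 1 ≤ k) (hk : k < m - 1)
    (x : ℝ) (hx : (m : ℝ) / ((m : ℝ) - k) ≤ x)
    (f : ℝ → ℝ)
    (hf : ∀ y : ℝ, f y =
      (((m : ℝ) - k) * (2 * k * x^2 + 2 * k * x + 2 * y^2 + 2 * y + m)) /
        (((m : ℝ) - k) * (2 * k * x^2 + y^2) + (y + m)^2)) :
    QuasiconvexOn ℝ (Set.Icc (0 : ℝ) ((m : ℝ) / ((m : ℝ) - k - 1))) f ∧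
      ∀ y ∈ Set.Icc (0 : ℝ) ((m : ℝ) / ((m : ℝ) - k - 1)),
        f y ≤ max (f 0) (f ((m : ℝ) / ((m : ℝ) - k - 1))) := by
  have hk2 : k + 2 ≤ m := by omega
  have hk2' : (k : ℝ) + 2 ≤ (m : ℝ) := by exact_mod_cast hk2
  have hk1' : (1 : ℝ) ≤ (k : ℝ) := by exact_mod_cast hk1
  have hc : (0 : ℝ) < (m : ℝ) - k := by linarith
  have hm0 : (0 : ℝ) < (m : ℝ) := by linarith
  have hx0 : 0 < x := lt_of_lt_of_le (div_pos hm0 hc) hx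
  have hD : ∀ y : ℝ, 0 ≤ y →
      0 < ((m : ℝ) - k) * (2 * k * x^2 + y^2) + (y + m)^2 := by
    intro y hy
    have h1 : (0 : ℝ) ≤ 2 * k * x^2 + y^2 := by positivity
    nlinarith [mul_nonneg hc.le h1]
  have key : ∀ u z v : ℝ, 0 ≤ u → u ≤ z → z ≤ v → f z ≤ max (f u) (f v) := by
    intro u z v hu huz hzv
    have hz : (0 : ℝ) ≤ z := hu.trans huz
    have hv : (0 : ℝ) ≤ v := hz.trans hzv
    set p : ℝ := (m : ℝ) + k - 1 with hpdef
    set q : ℝ := 2 * k * x^2 * ((m : ℝ) - k - 1) + m * ((m : ℝ) + k - 1)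
        - 2 * k * x * ((m : ℝ) - k + 1) with hqdef
    set s : ℝ := -(2 * k * x * (k * x + m)) with hsdef
    have hp0 : (0 : ℝ) < p := by rw [hpdef]; linarith
    have hs0 : s < 0 := by
      rw [hsdef]
      have : (0 : ℝ) < 2 * k * x * (k * x + m) := by positivity
      linarith
    have hcase : 2 * p * z * u + q * (z + u) + 2 * s ≤ 0 ∨
        0 ≤ 2 * p * z * v + q * (z + v) + 2 * s := by
      by_contra hcon
      push_neg at hcon
      obtain ⟨h1, h2⟩ := hcon
      rcases eq_or_lt_of_le (huz.trans hzv) with heq | huv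
      · subst heq; linarith
      · have hq : 2 * p * z + q < 0 := by
          by_contra hq'
          push_neg at hq'
          have := mul_nonneg (by linarith : (0:ℝ) ≤ v - u) hq'
          nlinarith [this]
        have h2pu : 2 * p * u + q < 0 := by
          have := mul_le_mul_of_nonneg_left huz hp0.le
          linarith
        have hmul : z * (2 * p * u + q) ≤ u * (2 * p * u + q) :=
          mul_le_mul_of_nonpos_right huz h2pu.le
        have hwu : 0 < p * u^2 + q * u + s := by nlinarith [hmul, h1]
        have hpuq : p * u + q < 0 := by
          have := mul_nonneg hp0.le hu
          linarith
        have : u * (p * u + q) ≤ 0 := mul_nonpos_of_nonneg_of_nonpos hu hpuq.le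
        nlinarith [this, hwu, hs0]
    rcases hcase with h | h
    · refine le_max_of_le_left ?_
      rw [hf z, hf u, div_le_div_iff₀ (hD z hz) (hD u hu)]
      have hid : (((m : ℝ) - k) * (2 * k * x^2 + 2 * k * x + 2 * z^2 + 2 * z + m)) *
            (((m : ℝ) - k) * (2 * k * x^2 + u^2) + (u + m)^2)
          - (((m : ℝ) - k) * (2 * k * x^2 + 2 * k * x + 2 * u^2 + 2 * u + m)) *
            (((m : ℝ) - k) * (2 * k * x^2 + z^2) + (z + m)^2)
          = (z - u) * (((m : ℝ) - k) * (2 * p * z * u + q * (z + u) + 2 * s)) := by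
        rw [hpdef, hqdef, hsdef]; ring
      have hH : (z - u) * (((m : ℝ) - k) * (2 * p * z * u + q * (z + u) + 2 * s)) ≤ 0 :=
        mul_nonpos_of_nonneg_of_nonpos (sub_nonneg.2 huz)
          (mul_nonpos_of_nonneg_of_nonpos hc.le h)
      linarith
    · refine le_max_of_le_right ?_
      rw [hf z, hf v, div_le_div_iff₀ (hD z hz) (hD v hv)]
      have hid : (((m : ℝ) - k) * (2 * k * x^2 + 2 * k * x + 2 * z^2 + 2 * z + m)) *
            (((m : ℝ) - k) * (2 * k * x^2 + v^2) + (v + m)^2)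
          - (((m : ℝ) - k) * (2 * k * x^2 + 2 * k * x + 2 * v^2 + 2 * v + m)) *
            (((m : ℝ) - k) * (2 * k * x^2 + z^2) + (z + m)^2)
          = (z - v) * (((m : ℝ) - k) * (2 * p * z * v + q * (z + v) + 2 * s)) := by
        rw [hpdef, hqdef, hsdef]; ring
      have hH : (z - v) * (((m : ℝ) - k) * (2 * p * z * v + q * (z + v) + 2 * s)) ≤ 0 :=
        mul_nonpos_of_nonpos_of_nonneg (sub_nonpos.2 hzv)
          (mul_nonneg hc.le h)
      linarith
  constructor
  · rw [quasiconvexOn_iff_le_max]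
    refine ⟨convex_Icc _ _, ?_⟩
    intro a ha b hb la lb hla hlb hlab
    obtain rfl : la = 1 - lb := by linarith
    simp only [smul_eq_mul]
    rcases le_total a b with hab | hab
    · have h1 : a ≤ (1 - lb) * a + lb * b := by
        have := mul_nonneg hlb (sub_nonneg.2 hab); linarith
      have h2 : (1 - lb) * a + lb * b ≤ b := by
        have := mul_nonneg hla (sub_nonneg.2 hab); linarith
      exact key a _ b ha.1 h1 h2
    · rw [max_comm]
      have h1 : b ≤ (1 - lb) * a + lb * b := by
        have := mul_nonneg hla (sub_nonneg.2 hab); linarith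
      have h2 : (1 - lb) * a + lb * b ≤ a := by
        have := mul_nonneg hlb (sub_nonneg.2 hab); linarith
      exact key b _ a hb.1 h1 h2
  · intro y hy
    exact key 0 y _ le_rfl hy.1 hy.2
end
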